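/- Let d ≥ 2 be an integer and let x₀, x₁ be distinct integers. Then the closed triangle in ℝ² with vertices (0,0), (d,x₀), (d,x₁) contains a lattice point (a,b) ∈ ℤ² with 1 ≤ a ≤ d−1. -/

import Mathlib

lemma stmt0_helper (d x₀ x₁ : ℤ) (hd : 2 ≤ d) (h : x₀ < x₁) :
    ∃ a b : ℤ, 1 ≤ a ∧ a ≤ d - 1 ∧
      ((a : ℝ), (b : ℝ)) ∈
        convexHull ℝ ({((0 : ℝ), (0 : ℝ)), ((d : ℝ), (x₀ : ℝ)), ((d : ℝ), (x₁ : ℝ))} :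
          Set (ℝ × ℝ)) := by
  have hd0 : (0:ℤ) < d := by omega
  set n : ℤ := (d - 1) * x₀ with hn
  set b : ℤ := (n + d - 1) / d with hb
  have hdiv : d * b + (n + d - 1) % d = n + d - 1 := by
    rw [hb]; exact Int.mul_ediv_add_emod _ _
  have hr0 : 0 ≤ (n + d - 1) % d := Int.emod_nonneg _ (by omega)
  have hr1 : (n + d - 1) % d < d := Int.emod_lt_of_pos _ hd0
  have hlb : n ≤ d * b := by omega
  have hub : d * b ≤ n + d - 1 := by omega
  have hub' : d * b ≤ (d - 1) * x₁ := by
    nlinarith [mul_nonneg (by omega : (0:ℤ) ≤ d - 1) (by omega : (0:ℤ) ≤ x₁ - x₀ - 1)]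
  refine ⟨d - 1, b, by omega, le_refl _, ?_⟩
  have hdR : (1:ℝ) < (d:ℝ) := by exact_mod_cast (by omega : (1:ℤ) < d)
  have hd1 : (0:ℝ) < (d:ℝ) - 1 := by linarith
  have hdpos : (0:ℝ) < (d:ℝ) := by linarith
  set c : ℝ := (d:ℝ) * (b:ℝ) / ((d:ℝ) - 1) with hc
  have hc0 : (x₀:ℝ) ≤ c := by
    rw [hc, le_div_iff₀ hd1]
    have : ((d:ℝ) - 1) * (x₀:ℝ) ≤ (d:ℝ) * (b:ℝ) := by exact_mod_cast hlb
    nlinarith [this]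
  have hc1 : c ≤ (x₁:ℝ) := by
    rw [hc, div_le_iff₀ hd1]
    have : (d:ℝ) * (b:ℝ) ≤ ((d:ℝ) - 1) * (x₁:ℝ) := by exact_mod_cast hub'
    nlinarith [this]
  have hxR : (x₀:ℝ) < (x₁:ℝ) := by exact_mod_cast h
  set t : ℝ := (c - (x₀:ℝ)) / ((x₁:ℝ) - (x₀:ℝ)) with ht
  have ht0 : 0 ≤ t := div_nonneg (by linarith) (by linarith)
  have ht1 : t ≤ 1 := by
    rw [ht, div_le_one (by linarith)]; linarith
  have hseg : ((d:ℝ), c) ∈ segment ℝ ((d:ℝ), (x₀:ℝ)) ((d:ℝ), (x₁:ℝ)) := by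
    refine ⟨1 - t, t, by linarith, ht0, by ring, ?_⟩
    have hne : (x₁:ℝ) - (x₀:ℝ) ≠ 0 := by linarith
    rw [Prod.smul_mk, Prod.smul_mk, Prod.mk_add_mk]
    refine Prod.ext (by simp; ring) ?_
    simp only [smul_eq_mul]
    have hte : t * ((x₁:ℝ) - (x₀:ℝ)) = c - (x₀:ℝ) := by rw [ht]; exact div_mul_cancel₀ _ hne
    field_simp [ht]
    linear_combination hte
  have hBC : ((d:ℝ), c) ∈ convexHull ℝ
      ({((0:ℝ),(0:ℝ)), ((d:ℝ),(x₀:ℝ)), ((d:ℝ),(x₁:ℝ))} : Set (ℝ × ℝ)) :=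
    segment_subset_convexHull (by simp) (by simp) hseg
  have hA : ((0:ℝ),(0:ℝ)) ∈ convexHull ℝ
      ({((0:ℝ),(0:ℝ)), ((d:ℝ),(x₀:ℝ)), ((d:ℝ),(x₁:ℝ))} : Set (ℝ × ℝ)) :=
    subset_convexHull ℝ _ (by simp)
  have hp : (((d:ℝ) - 1), (b:ℝ)) ∈ segment ℝ ((0:ℝ),(0:ℝ)) ((d:ℝ), c) := by
    refine ⟨1/(d:ℝ), ((d:ℝ)-1)/(d:ℝ), by positivity, by positivity, by field_simp; ring, ?_⟩
    rw [Prod.smul_mk, Prod.smul_mk, Prod.mk_add_mk]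
    refine Prod.ext ?_ ?_
    · simp only [smul_eq_mul]; field_simp; ring
    · simp only [smul_eq_mul, hc]; field_simp; ring
  have := (convex_convexHull ℝ _).segment_subset hA hBC hp
  push_cast
  exact this

/-- For an integer `d ≥ 2` and distinct integers `x₀ x₁`, the closed
triangle in `ℝ²` with vertices `(0,0)`, `(d,x₀)`, `(d,x₁)` contains a lattice
point `(a,b)` with `1 ≤ a ≤ d - 1`. -/
theorem stmt0 (d x₀ x₁ : ℤ) (hd : 2 ≤ d) (hx : x₀ ≠ x₁) :
    ∃ a b : ℤ, 1 ≤ a ∧ a ≤ d - 1 ∧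
      ((a : ℝ), (b : ℝ)) ∈
        convexHull ℝ ({((0 : ℝ), (0 : ℝ)), ((d : ℝ), (x₀ : ℝ)), ((d : ℝ), (x₁ : ℝ))} :
          Set (ℝ × ℝ)) := by
  rcases hx.lt_or_gt with h | h
  · exact stmt0_helper d x₀ x₁ hd h
  · have := stmt0_helper d x₁ x₀ hd h
    rwa [Set.pair_comm ((d:ℝ), (x₁:ℝ)) ((d:ℝ), (x₀:ℝ))] at this
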